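/- For each fixed n ∈ ℤ, the only constructible right ideals of the monoid S that contain the element y_n are S itself, y_n·S, and X = ⋃_{m ∈ ℤ} x_m·S ∪ ⋃_{m ∈ ℤ} y_m·S. -/

import Mathlib

/-- The alphabet of the monoid `S`: letters `a`, `b` and `x n`, `y n` for `n : ℤ`. -/
inductive SGen : Type
  | a : SGen
  | b : SGen
  | x : ℤ → SGen
  | y : ℤ → SGen

/-- The defining relations of `S`: `a·b·x n = b·x n` and `a·b·y n = b·y (n+1)` for `n ∈ ℤ`. -/
inductive SRel : FreeMonoid SGen → FreeMonoid SGen → Prop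
  | xr (n : ℤ) : SRel (.of .a * .of .b * .of (.x n)) (.of .b * .of (.x n))
  | yr (n : ℤ) : SRel (.of .a * .of .b * .of (.y n)) (.of .b * .of (.y (n + 1)))

/-- The monoid `S` presented by the generators `SGen` and the relations `SRel`. -/
abbrev S : Type := PresentedMonoid SRel

/-- The images of the generators in `S`. -/
def gen (g : SGen) : S := PresentedMonoid.of SRel g

/-- The principal right ideal `sS` of a monoid. -/
def rIdeal {M : Type*} [Monoid M] (s : M) : Set M := {m | ∃ u, m = s * u}

/-- The constructible right ideals of a monoid `M`: the smallest family of subsets of `M`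
containing `M` itself and closed under the operations `X ↦ tX` and `X ↦ t⁻¹X = {m | t·m ∈ X}`
for every `t ∈ M`. -/
inductive IsConstructible (M : Type*) [Monoid M] : Set M → Prop
  | univ : IsConstructible M Set.univ
  | mul (t : M) {X : Set M} : IsConstructible M X → IsConstructible M ((t * ·) '' X)
  | preimage (t : M) {X : Set M} : IsConstructible M X → IsConstructible M {m | t * m ∈ X}
namespace SP

instance : DecidableEq SGen := fun g h => by
  cases g <;> cases h <;> first
    | exact isTrue rfl
    | exact isFalse (by intro hh; exact SGen.noConfusion hh)
    | · rename_i i j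
        rcases Int.decEq i j with h' | h'
        · exact isFalse (by intro hh; injection hh; contradiction)
        · exact isTrue (by rw [h'])

/-- left-multiply the normal form by one generator -/
def step' (g : SGen) (M : List SGen) : List SGen :=
  match g with
  | .a => match M with
    | .b :: .x k :: M' => .b :: .x k :: M'
    | .b :: .y k :: M' => .b :: .y (k+1) :: M'
    | M => .a :: M
  | .b => .b :: M
  | .x k => .x k :: M
  | .y k => .y k :: M

@[simp] lemma step'_b (M) : step' .b M = .b :: M := rfl
@[simp] lemma step'_x (k M) : step' (.x k) M = .x k :: M := rfl
@[simp] lemma step'_y (k M) : step' (.y k) M = .y k :: M := rfl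
@[simp] lemma step'_abx (k M) : step' .a (.b :: .x k :: M) = .b :: .x k :: M := rfl
@[simp] lemma step'_aby (k M) : step' .a (.b :: .y k :: M) = .b :: .y (k+1) :: M := rfl

/-- case analysis for `step' a`. -/
lemma step'_a (M) :
    (∃ k M', M = .b :: .x k :: M' ∧ step' .a M = M) ∨
    (∃ k M', M = .b :: .y k :: M' ∧ step' .a M = .b :: .y (k+1) :: M') ∨
    (step' .a M = .a :: M) := by
  match M with
  | [] => right; right; rfl
  | [g] => cases g <;> (right; right; rfl)
  | .a :: g :: M' => right; right; rfl
  | .x k :: g :: M' => right; right; rfl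
  | .y k :: g :: M' => right; right; rfl
  | .b :: .a :: M' => right; right; rfl
  | .b :: .b :: M' => right; right; rfl
  | .b :: .x k :: M' => left; exact ⟨k, M', rfl, rfl⟩
  | .b :: .y k :: M' => right; left; exact ⟨k, M', rfl, rfl⟩

lemma step'_ne_nil (g M) : step' g M ≠ [] := by
  cases g with
  | a =>
    rcases step'_a M with ⟨k, M', h1, h2⟩ | ⟨k, M', h1, h2⟩ | h2 <;> rw [h2] <;>
      first | simp [h1] | simp
  | b => simp
  | x k => simp
  | y k => simp

lemma step'_inj {g M N} (h : step' g M = step' g N) : M = N := by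
  cases g with
  | b => simpa using h
  | x k => simpa using h
  | y k => simpa using h
  | a =>
    rcases step'_a M with ⟨k, M', h1, h2⟩ | ⟨k, M', h1, h2⟩ | h2 <;>
      rcases step'_a N with ⟨j, N', g1, g2⟩ | ⟨j, N', g1, g2⟩ | g2 <;>
        rw [h2, g2] at h <;> simp_all <;> omega

/-- fold a word onto a normal form -/
def wf (w : List SGen) (l : List SGen) : List SGen := w.foldr step' l

@[simp] lemma wf_nil (l) : wf [] l = l := rfl
@[simp] lemma wf_cons (g w l) : wf (g :: w) l = step' g (wf w l) := rfl

lemma wf_append (u v l : List SGen) : wf (u ++ v) l = wf u (wf v l) :=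
  List.foldr_append ..

lemma wf_rel {u v : FreeMonoid SGen} (h : ConGen.Rel SRel u v) (l : List SGen) :
    wf u.toList l = wf v.toList l := by
  induction h generalizing l with
  | of p q hpq =>
    cases hpq with
    | xr n => rfl
    | yr n => rfl
  | refl => rfl
  | symm _ ih => exact (ih l).symm
  | trans _ _ ih1 ih2 => exact (ih1 l).trans (ih2 l)
  | mul _ _ ih1 ih2 =>
    rename_i w x y z _ _
    show wf ((w * y).toList) l = _
    rw [FreeMonoid.toList_mul, FreeMonoid.toList_mul, wf_append, wf_append, ih2, ih1]

/-- normal form of an element of `S` -/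
def nf (s : S) : List SGen :=
  Con.liftOn s (fun u => wf u.toList []) (fun _ _ h => wf_rel h [])

abbrev mk1 (w : List SGen) : S := PresentedMonoid.mk SRel (FreeMonoid.ofList w)

lemma nf_mk (u : FreeMonoid SGen) : nf (PresentedMonoid.mk SRel u) = wf u.toList [] := rfl

lemma nf_mk1 (w : List SGen) : nf (mk1 w) = wf w [] := rfl

@[simp] lemma mk1_nil : mk1 [] = 1 := rfl

lemma mk1_cons (g w) : mk1 (g :: w) = gen g * mk1 w := rfl

lemma gen_eq (g) : gen g = mk1 [g] := rfl

lemma srel_x (k : ℤ) : gen .a * (gen .b * gen (.x k)) = gen .b * gen (.x k) := by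
  have : (conGen SRel) (.of .a * .of .b * .of (.x k)) (.of .b * .of (.x k)) :=
    ConGen.Rel.of _ _ (SRel.xr k)
  have h := (Con.eq (conGen SRel)).2 this
  rw [← mul_assoc]; exact h

lemma srel_y (k : ℤ) : gen .a * (gen .b * gen (.y k)) = gen .b * gen (.y (k+1)) := by
  have : (conGen SRel) (.of .a * .of .b * .of (.y k)) (.of .b * .of (.y (k+1))) :=
    ConGen.Rel.of _ _ (SRel.yr k)
  have h := (Con.eq (conGen SRel)).2 this
  rw [← mul_assoc]; exact h

lemma arel_x (k : ℤ) (u : S) :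
    gen .a * (gen .b * (gen (.x k) * u)) = gen .b * (gen (.x k) * u) := by
  rw [← mul_assoc (gen .b), ← mul_assoc, srel_x, mul_assoc]

lemma arel_y (k : ℤ) (u : S) :
    gen .a * (gen .b * (gen (.y k) * u)) = gen .b * (gen (.y (k+1)) * u) := by
  rw [← mul_assoc (gen .b), ← mul_assoc, srel_y, mul_assoc]

lemma step'_mk (g M) : mk1 (step' g M) = gen g * mk1 M := by
  cases g with
  | b => rfl
  | x k => rfl
  | y k => rfl
  | a =>
    rcases step'_a M with ⟨k, M', h1, h2⟩ | ⟨k, M', h1, h2⟩ | h2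
    · subst h1; rw [h2]; simp only [mk1_cons]; exact (arel_x k (mk1 M')).symm
    · subst h1; rw [h2]; simp only [mk1_cons]; exact (arel_y k (mk1 M')).symm
    · rw [h2]; rfl

lemma wf_mk (w l : List SGen) : mk1 (wf w l) = mk1 w * mk1 l := by
  induction w with
  | nil => rw [wf_nil, mk1_nil, one_mul]
  | cons g w ih => rw [wf_cons, step'_mk, ih, mk1_cons, mul_assoc]

lemma mk1_nf (s : S) : mk1 (nf s) = s := by
  refine PresentedMonoid.inductionOn s fun u => ?_
  show mk1 (wf u.toList []) = _
  rw [wf_mk, mk1_nil, mul_one]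
  rfl

lemma nf_inj {s t : S} (h : nf s = nf t) : s = t := by
  rw [← mk1_nf s, ← mk1_nf t, h]

@[simp] lemma nf_one : nf (1 : S) = [] := rfl

lemma nf_idem (s : S) : wf (nf s) [] = nf s := nf_mk1 (nf s) ▸ congrArg nf (mk1_nf s)

lemma nf_mul_gen (g : SGen) (m : S) : nf (gen g * m) = step' g (nf m) := by
  conv_lhs => rw [← mk1_nf m]
  rw [← mk1_cons, nf_mk1, wf_cons]
  rw [show wf (nf m) [] = nf m from nf_idem m]

lemma nf_cons {g : SGen} (hg : g ≠ .a) (m : S) : nf (gen g * m) = g :: nf m := by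
  rw [nf_mul_gen]; cases g with
  | a => exact absurd rfl hg
  | b => rfl
  | x k => rfl
  | y k => rfl

@[simp] lemma nf_gen (g : SGen) : nf (gen g) = [g] := by
  have := nf_mul_gen g 1
  rw [mul_one, nf_one] at this
  rw [this]
  cases g with
  | a => rfl
  | b => rfl
  | x k => rfl
  | y k => rfl

lemma split {m : S} {g M} (h : nf m = g :: M) :
    ∃ m', m = gen g * m' ∧ nf m' = M := by
  refine ⟨mk1 M, ?_, ?_⟩
  · rw [← mk1_nf m, h, mk1_cons]
  · -- need : nf (mk1 M) = M, i.e. wf M [] = M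
    have h1 : step' g (wf M []) = g :: M := by
      have := nf_idem m
      rw [h] at this
      simpa [wf_cons] using this
    rw [nf_mk1]
    cases g with
    | b => simpa using h1
    | x k => simpa using h1
    | y k => simpa using h1
    | a =>
      rcases step'_a (wf M []) with ⟨k, M', e1, e2⟩ | ⟨k, M', e1, e2⟩ | e2 <;>
        rw [e2] at h1
      · rw [e1] at h1; exact absurd h1 (by simp)
      · exact absurd h1 (by simp)
      · simpa using h1

lemma cancel_gen {g : SGen} {m m' : S} (h : gen g * m = gen g * m') : m = m' := by
  apply nf_inj
  apply step'_inj (g := g)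
  rw [← nf_mul_gen, ← nf_mul_gen, h]

lemma mul_eq_one {u v : S} (h : u * v = 1) : u = 1 ∧ v = 1 := by
  rcases hn : nf u with _ | ⟨g, M⟩
  · have hu : u = 1 := nf_inj (by rw [hn, nf_one])
    refine ⟨hu, ?_⟩; rwa [hu, one_mul] at h
  · rcases split hn with ⟨u', rfl, _⟩
    have : nf (gen g * (u' * v)) = nf 1 := by rw [mul_assoc] at h; rw [h]
    rw [nf_mul_gen, nf_one] at this
    exact absurd this (step'_ne_nil _ _)

abbrev apow (j : ℕ) : S := (gen .a)^j

lemma apow_succ (j : ℕ) : apow (j+1) = gen .a * apow j := pow_succ' (gen .a) j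

lemma apow_bx (j : ℕ) (k : ℤ) (u : S) :
    apow j * (gen .b * (gen (.x k) * u)) = gen .b * (gen (.x k) * u) := by
  induction j with
  | zero => simp
  | succ j ih => rw [apow_succ, mul_assoc, ih, arel_x]

lemma apow_by (j : ℕ) (k : ℤ) (u : S) :
    apow j * (gen .b * (gen (.y k) * u)) = gen .b * (gen (.y (k + j)) * u) := by
  induction j with
  | zero => simp
  | succ j ih =>
    rw [apow_succ, mul_assoc, ih, arel_y]
    congr 2
    push_cast
    ring

lemma nf_apow_bx {v : S} {k V} (j : ℕ) (h : nf v = .b :: .x k :: V) :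
    nf (apow j * v) = .b :: .x k :: V := by
  induction j with
  | zero => simpa using h
  | succ j ih => rw [apow_succ, mul_assoc, nf_mul_gen, ih, step'_abx]

lemma nf_apow_by {v : S} {k V} (j : ℕ) (h : nf v = .b :: .y k :: V) :
    nf (apow j * v) = .b :: .y (k + j) :: V := by
  induction j with
  | zero => simpa using h
  | succ j ih =>
    rw [apow_succ, mul_assoc, nf_mul_gen, ih, step'_aby]
    congr 3
    push_cast
    ring

lemma nf_apow_default {v : S} (j : ℕ)
    (hx : ∀ k V, nf v ≠ .b :: .x k :: V) (hy : ∀ k V, nf v ≠ .b :: .y k :: V) :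
    nf (apow j * v) = List.replicate j .a ++ nf v := by
  induction j with
  | zero => simp
  | succ j ih =>
    rw [apow_succ, mul_assoc, nf_mul_gen, ih]
    rcases step'_a (List.replicate j .a ++ nf v) with ⟨k, M', e1, e2⟩ | ⟨k, M', e1, e2⟩ | e2
    · exfalso
      cases j with
      | zero => exact hx k M' (by simpa using e1)
      | succ j => simp [List.replicate_succ] at e1
    · exfalso
      cases j with
      | zero => exact hy k M' (by simpa using e1)
      | succ j => simp [List.replicate_succ] at e1
    · rw [e2, List.replicate_succ]; rfl

lemma peelA : ∀ (L : List SGen) (w : S), nf w = L →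
    ∃ (j : ℕ) (r : S), w = apow j * r ∧ nf w = List.replicate j .a ++ nf r ∧
      (nf r = [] ∨ ∃ g M, g ≠ SGen.a ∧ nf r = g :: M) := by
  intro L
  induction L with
  | nil => intro w h; exact ⟨0, w, by simp, by simp, Or.inl h⟩
  | cons g L' ih =>
    intro w h
    by_cases hg : g = SGen.a
    · subst hg
      rcases split h with ⟨w', rfl, hw'⟩
      rcases ih w' hw' with ⟨j, r, rfl, h1, h2⟩
      refine ⟨j+1, r, by rw [apow_succ, mul_assoc], ?_, h2⟩
      rw [h, List.replicate_succ]
      rw [hw'] at h1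
      simp [← h1]
    · exact ⟨0, w, by simp, by simp, Or.inr ⟨g, L', hg, h⟩⟩

def XX : Set S := (⋃ m : ℤ, rIdeal (gen (.x m))) ∪ ⋃ m : ℤ, rIdeal (gen (.y m))

lemma mem_XX {m : S} :
    m ∈ XX ↔ (∃ k u, m = gen (.x k) * u) ∨ (∃ k u, m = gen (.y k) * u) := by
  simp [XX, rIdeal, Set.mem_iUnion, Set.mem_union, Set.mem_setOf_eq]

def InF (Y : Set S) : Prop :=
  Y = ∅ ∨ Y = Set.univ ∨ (∃ w : S, Y = rIdeal w) ∨ (∃ w : S, Y = (w * ·) '' XX)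

lemma mem_rIdeal {s m : S} : m ∈ rIdeal s ↔ ∃ u, m = s * u := Iff.rfl

lemma image_one (Y : Set S) : ((1:S) * ·) '' Y = Y := by simp

lemma step'_a_head (M) : ∃ T, step' .a M = .a :: T ∨ step' .a M = .b :: T := by
  rcases step'_a M with ⟨k, M', e1, e2⟩ | ⟨k, M', e1, e2⟩ | e2
  · exact ⟨.x k :: M', Or.inr (by rw [e2, e1])⟩
  · exact ⟨.y (k+1) :: M', Or.inr (by rw [e2])⟩
  · exact ⟨M, Or.inl e2⟩

lemma nf_a_head (v : S) : ∃ T, nf (gen .a * v) = .a :: T ∨ nf (gen .a * v) = .b :: T := by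
  rw [nf_mul_gen]; exact step'_a_head _

lemma bz_cases (L : List SGen) :
    (∃ k V, L = .b :: .x k :: V) ∨ (∃ k V, L = .b :: .y k :: V) ∨ step' .a L = .a :: L := by
  rcases step'_a L with ⟨k, M', e1, e2⟩ | ⟨k, M', e1, e2⟩ | e2
  · exact Or.inl ⟨k, M', e1⟩
  · exact Or.inr (Or.inl ⟨k, M', e1⟩)
  · exact Or.inr (Or.inr e2)

lemma default_not_bx {L} (hd : step' .a L = .a :: L) : ∀ k V, L ≠ .b :: .x k :: V := by
  intro k V h; rw [h, step'_abx] at hd; simp at hd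

lemma default_not_by {L} (hd : step' .a L = .a :: L) : ∀ k V, L ≠ .b :: .y k :: V := by
  intro k V h; rw [h, step'_aby] at hd; simp at hd

/-- the set of elements whose `g`-translate lies in `rIdeal w` belongs to the family. -/
lemma preA (g : SGen) (w : S) : InF {m : S | gen g * m ∈ rIdeal w} := by
  rcases hn : nf w with _ | ⟨g₀, M⟩
  · -- w = 1
    have hw : w = 1 := nf_inj (by rw [hn, nf_one])
    right; left
    apply Set.eq_univ_iff_forall.2
    intro m
    exact ⟨gen g * m, by rw [hw, one_mul]⟩
  rcases split hn with ⟨w₁, rfl, hw₁⟩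
  by_cases hgg : g = g₀
  · subst hgg
    right; right; left
    refine ⟨w₁, Set.ext fun m => ?_⟩
    constructor
    · rintro ⟨u, h⟩
      rw [mul_assoc] at h
      exact ⟨u, cancel_gen h⟩
    · rintro ⟨u, rfl⟩
      exact ⟨u, by rw [mul_assoc]⟩
  -- g ≠ g₀
  have empty_head : ∀ (hg : g ≠ SGen.a) (hg0 : g₀ ≠ SGen.a),
      InF {m : S | gen g * m ∈ rIdeal (gen g₀ * w₁)} := by
    intro hg hg0
    left
    apply Set.eq_empty_iff_forall_notMem.2
    rintro m ⟨u, h⟩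
    rw [mul_assoc] at h
    have := congrArg nf h
    rw [nf_cons hg, nf_cons hg0] at this
    exact hgg (by injection this)
  have empty_za : ∀ (hg : g ≠ SGen.a) (hg2 : g ≠ SGen.b) (hg0 : g₀ = SGen.a),
      InF {m : S | gen g * m ∈ rIdeal (gen g₀ * w₁)} := by
    intro hg hg2 hg0
    subst hg0
    left
    apply Set.eq_empty_iff_forall_notMem.2
    rintro m ⟨u, h⟩
    rw [mul_assoc] at h
    have := congrArg nf h
    rcases nf_a_head (w₁ * u) with ⟨T, hT | hT⟩ <;>
      rw [nf_cons hg, hT] at this <;> [exact hg (by injection this); exact hg2 (by injection this)]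
  cases g with
  | x k =>
    by_cases h0 : g₀ = SGen.a
    · exact empty_za (by simp) (by simp) h0
    · exact empty_head (by simp) h0
  | y k =>
    by_cases h0 : g₀ = SGen.a
    · exact empty_za (by simp) (by simp) h0
    · exact empty_head (by simp) h0
  | b =>
    cases g₀ with
    | b => exact absurd rfl hgg
    | x k => exact empty_head (by simp) (by simp)
    | y k => exact empty_head (by simp) (by simp)
    | a =>
      -- BIG case : {m | b·m ∈ (a·w₁)S}
      rcases peelA (nf w₁) w₁ rfl with ⟨j, r, hw₁eq, hrep, hr⟩
      rcases hr with hr | ⟨g', M', hg', hr⟩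
      · -- r = 1 : w = a^{j+1}, result XX
        have hr1 : r = 1 := nf_inj (by rw [hr, nf_one])
        subst hr1
        have hw : gen SGen.a * w₁ = apow (j+1) := by
          rw [hw₁eq, mul_one, apow_succ]
        have claim : {m : S | gen .b * m ∈ rIdeal (gen .a * w₁)} = XX := by
          ext m
          simp only [Set.mem_setOf_eq, mem_rIdeal]
          constructor
          · rintro ⟨u, h⟩
            rw [hw] at h
            have hnf := congrArg nf h
            rw [nf_cons (by simp) m] at hnf
            rcases bz_cases (nf u) with ⟨k, V, hu⟩ | ⟨k, V, hu⟩ | hd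
            · rw [nf_apow_bx (j+1) hu] at hnf
              have hm : nf m = SGen.x k :: V := by injection hnf
              rcases split hm with ⟨m', rfl, _⟩
              exact mem_XX.2 (Or.inl ⟨k, m', rfl⟩)
            · rw [nf_apow_by (j+1) hu] at hnf
              have hm : nf m = SGen.y (k + (j+1:ℕ)) :: V := by injection hnf
              rcases split hm with ⟨m', rfl, _⟩
              exact mem_XX.2 (Or.inr ⟨_, m', rfl⟩)
            · rw [nf_apow_default (j+1) (default_not_bx hd) (default_not_by hd),
                List.replicate_succ] at hnf
              simp at hnf
          · intro hm
            rcases mem_XX.1 hm with ⟨k, u, rfl⟩ | ⟨k, u, rfl⟩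
            · exact ⟨gen .b * (gen (.x k) * u), by rw [hw, apow_bx]⟩
            · refine ⟨gen .b * (gen (.y (k - (j+1:ℕ))) * u), ?_⟩
              rw [hw, apow_by]
              congr 3
              push_cast
              ring
        right; right; right
        exact ⟨1, by rw [claim, image_one]⟩
      · cases g' with
        | a => exact absurd rfl hg'
        | x k =>
          -- empty
          rcases split hr with ⟨r₁, hreq, hr₁⟩
          left
          apply Set.eq_empty_iff_forall_notMem.2
          rintro m ⟨u, h⟩
          have hru : nf (r * u) = SGen.x k :: nf (r₁ * u) := by
            rw [hreq, mul_assoc, nf_cons (by simp)]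
          have hwu : nf (gen SGen.a * w₁ * u) = SGen.a ::
              (List.replicate j SGen.a ++ nf (r * u)) := by
            rw [mul_assoc, hw₁eq, mul_assoc, nf_mul_gen,
              nf_apow_default j (by rw [hru]; simp) (by rw [hru]; simp)]
            rcases step'_a (List.replicate j SGen.a ++ nf (r * u)) with
              ⟨k', V', e1, e2⟩ | ⟨k', V', e1, e2⟩ | e2
            · exfalso
              cases j with
              | zero => rw [List.replicate, List.nil_append, hru] at e1; simp at e1
              | succ j => simp [List.replicate_succ] at e1
            · exfalso
              cases j with
              | zero => rw [List.replicate, List.nil_append, hru] at e1; simp at e1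
              | succ j => simp [List.replicate_succ] at e1
            · rw [e2]
          have := congrArg nf h
          rw [nf_cons (by simp), hwu] at this
          simp at this
        | y k =>
          -- empty (same as x)
          rcases split hr with ⟨r₁, hreq, hr₁⟩
          left
          apply Set.eq_empty_iff_forall_notMem.2
          rintro m ⟨u, h⟩
          have hru : nf (r * u) = SGen.y k :: nf (r₁ * u) := by
            rw [hreq, mul_assoc, nf_cons (by simp)]
          have hwu : nf (gen SGen.a * w₁ * u) = SGen.a ::
              (List.replicate j SGen.a ++ nf (r * u)) := by
            rw [mul_assoc, hw₁eq, mul_assoc, nf_mul_gen,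
              nf_apow_default j (by rw [hru]; simp) (by rw [hru]; simp)]
            rcases step'_a (List.replicate j SGen.a ++ nf (r * u)) with
              ⟨k', V', e1, e2⟩ | ⟨k', V', e1, e2⟩ | e2
            · exfalso
              cases j with
              | zero => rw [List.replicate, List.nil_append, hru] at e1; simp at e1
              | succ j => simp [List.replicate_succ] at e1
            · exfalso
              cases j with
              | zero => rw [List.replicate, List.nil_append, hru] at e1; simp at e1
              | succ j => simp [List.replicate_succ] at e1
            · rw [e2]
          have := congrArg nf h
          rw [nf_cons (by simp), hwu] at this
          simp at this
        | b =>
          rcases split hr with ⟨r₁, hreq, hr₁⟩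
          have hwfac : ∀ u : S, gen SGen.a * w₁ * u = apow (j+1) * (gen SGen.b * (r₁ * u)) := by
            intro u
            rw [hw₁eq, hreq, apow_succ]
            rw [mul_assoc, mul_assoc, mul_assoc, mul_assoc]
          rcases hM' : M' with _ | ⟨g₁, M₂⟩
          · -- r₁ = 1 : w = a^{j+1} b, result XX
            rw [hM'] at hr₁
            have hr11 : r₁ = 1 := nf_inj (by rw [hr₁, nf_one])
            subst hr11
            have claim : {m : S | gen .b * m ∈ rIdeal (gen .a * w₁)} = XX := by
              ext m
              simp only [Set.mem_setOf_eq, mem_rIdeal]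
              constructor
              · rintro ⟨u, h⟩
                rw [hwfac u, one_mul] at h
                have hnf := congrArg nf h
                rw [nf_cons (by simp) m] at hnf
                rcases hu : nf u with _ | ⟨gu, Vu⟩
                · rw [nf_apow_default (j+1) (by rw [nf_cons (by simp), hu]; simp)
                    (by rw [nf_cons (by simp), hu]; simp), List.replicate_succ] at hnf
                  simp at hnf
                · cases gu with
                  | a =>
                    rw [nf_apow_default (j+1) (by rw [nf_cons (by simp), hu]; simp)
                      (by rw [nf_cons (by simp), hu]; simp), List.replicate_succ] at hnf
                    simp at hnf
                  | b =>
                    rw [nf_apow_default (j+1) (by rw [nf_cons (by simp), hu]; simp)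
                      (by rw [nf_cons (by simp), hu]; simp), List.replicate_succ] at hnf
                    simp at hnf
                  | x k =>
                    rw [nf_apow_bx (j+1) (by rw [nf_cons (by simp), hu])] at hnf
                    have hm : nf m = SGen.x k :: Vu := by injection hnf
                    rcases split hm with ⟨m', rfl, _⟩
                    exact mem_XX.2 (Or.inl ⟨k, m', rfl⟩)
                  | y k =>
                    rw [nf_apow_by (j+1) (by rw [nf_cons (by simp), hu])] at hnf
                    have hm : nf m = SGen.y (k + (j+1:ℕ)) :: Vu := by injection hnf
                    rcases split hm with ⟨m', rfl, _⟩
                    exact mem_XX.2 (Or.inr ⟨_, m', rfl⟩)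
              · intro hm
                rcases mem_XX.1 hm with ⟨k, u, rfl⟩ | ⟨k, u, rfl⟩
                · exact ⟨gen (.x k) * u, by rw [hwfac, one_mul, apow_bx]⟩
                · refine ⟨gen (.y (k - (j+1:ℕ))) * u, ?_⟩
                  rw [hwfac, one_mul, apow_by]
                  congr 3
                  push_cast
                  ring
            right; right; right
            exact ⟨1, by rw [claim, image_one]⟩
          · rw [hM'] at hr₁
            rcases split hr₁ with ⟨r₂, hr₁eq, hr₂⟩
            cases g₁ with
            | a =>
              left
              apply Set.eq_empty_iff_forall_notMem.2
              rintro m ⟨u, h⟩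
              rw [hwfac u] at h
              have hr1u : ∃ T, (nf (r₁ * u) = SGen.a :: T ∨ nf (r₁ * u) = SGen.b :: T) := by
                rw [hr₁eq, mul_assoc]; exact nf_a_head _
              rcases hr1u with ⟨T, hT⟩
              have hnb : nf (gen SGen.b * (r₁ * u)) = SGen.b :: nf (r₁ * u) :=
                nf_cons (by simp) _
              have hnotx : ∀ k V, nf (gen SGen.b * (r₁ * u)) ≠ .b :: .x k :: V := by
                intro k V hc
                rw [hnb] at hc
                rcases hT with hT | hT <;> rw [hT] at hc <;> simp at hc
              have hnoty : ∀ k V, nf (gen SGen.b * (r₁ * u)) ≠ .b :: .y k :: V := by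
                intro k V hc
                rw [hnb] at hc
                rcases hT with hT | hT <;> rw [hT] at hc <;> simp at hc
              have hnf := congrArg nf h
              rw [nf_cons (by simp) m, nf_apow_default (j+1) hnotx hnoty,
                List.replicate_succ] at hnf
              simp at hnf
            | b =>
              left
              apply Set.eq_empty_iff_forall_notMem.2
              rintro m ⟨u, h⟩
              rw [hwfac u] at h
              have hr1u : nf (r₁ * u) = SGen.b :: nf (r₂ * u) := by
                rw [hr₁eq, mul_assoc]; exact nf_cons (by simp) _
              have hnb : nf (gen SGen.b * (r₁ * u)) = SGen.b :: nf (r₁ * u) :=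
                nf_cons (by simp) _
              have hnotx : ∀ k V, nf (gen SGen.b * (r₁ * u)) ≠ .b :: .x k :: V := by
                intro k V hc
                rw [hnb, hr1u] at hc
                simp at hc
              have hnoty : ∀ k V, nf (gen SGen.b * (r₁ * u)) ≠ .b :: .y k :: V := by
                intro k V hc
                rw [hnb, hr1u] at hc
                simp at hc
              have hnf := congrArg nf h
              rw [nf_cons (by simp) m, nf_apow_default (j+1) hnotx hnoty,
                List.replicate_succ] at hnf
              simp at hnf
            | x k =>
              exfalso
              have hwval : gen SGen.a * w₁ = gen SGen.b * (gen (.x k) * r₂) := by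
                have := hwfac 1
                rw [mul_one, mul_one, hr₁eq, apow_bx] at this
                exact this
              have := hn
              rw [hwval, nf_cons (by simp)] at this
              simp at this
            | y k =>
              exfalso
              have hwval : gen SGen.a * w₁ = gen SGen.b * (gen (.y (k + (j+1:ℕ))) * r₂) := by
                have := hwfac 1
                rw [mul_one, mul_one, hr₁eq, apow_by] at this
                exact this
              have := hn
              rw [hwval, nf_cons (by simp)] at this
              simp at this
  | a =>
    cases g₀ with
    | a => exact absurd rfl hgg
    | x k =>
      left
      apply Set.eq_empty_iff_forall_notMem.2
      rintro m ⟨u, h⟩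
      rw [mul_assoc] at h
      have := congrArg nf h
      rcases nf_a_head m with ⟨T, hT | hT⟩ <;>
        rw [hT, nf_cons (by simp)] at this <;> exact absurd this (by simp)
    | y k =>
      left
      apply Set.eq_empty_iff_forall_notMem.2
      rintro m ⟨u, h⟩
      rw [mul_assoc] at h
      have := congrArg nf h
      rcases nf_a_head m with ⟨T, hT | hT⟩ <;>
        rw [hT, nf_cons (by simp)] at this <;> exact absurd this (by simp)
    | b =>
      rcases hM : M with _ | ⟨g₁, V⟩
      · -- w₁ = 1 : a⁻¹(bS) = b·XX
        rw [hM] at hw₁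
        have hw11 : w₁ = 1 := nf_inj (by rw [hw₁, nf_one])
        subst hw11
        have claim : {m : S | gen .a * m ∈ rIdeal (gen .b * 1)} = (gen .b * ·) '' XX := by
          ext m
          simp only [Set.mem_setOf_eq, mem_rIdeal]
          constructor
          · rintro ⟨u, h⟩
            rw [mul_one] at h
            have hnf := congrArg nf h
            rw [nf_mul_gen, nf_cons (show SGen.b ≠ SGen.a by simp) u] at hnf
            rcases step'_a (nf m) with ⟨k, V', e1, e2⟩ | ⟨k, V', e1, e2⟩ | e2
            · rcases split e1 with ⟨m₁, rfl, hm₁⟩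
              rcases split hm₁ with ⟨m₂, rfl, _⟩
              exact ⟨gen (.x k) * m₂, mem_XX.2 (Or.inl ⟨k, m₂, rfl⟩), rfl⟩
            · rcases split e1 with ⟨m₁, rfl, hm₁⟩
              rcases split hm₁ with ⟨m₂, rfl, _⟩
              exact ⟨gen (.y k) * m₂, mem_XX.2 (Or.inr ⟨k, m₂, rfl⟩), rfl⟩
            · rw [e2] at hnf
              simp at hnf
          · rintro ⟨ξ, hξ, rfl⟩
            rcases mem_XX.1 hξ with ⟨k, u, rfl⟩ | ⟨k, u, rfl⟩
            · exact ⟨gen (.x k) * u, by rw [arel_x, mul_one]⟩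
            · exact ⟨gen (.y (k+1)) * u, by rw [arel_y, mul_one]⟩
        right; right; right
        exact ⟨gen .b, claim⟩
      · rw [hM] at hw₁
        rcases split hw₁ with ⟨v, hw₁eq, hv⟩
        cases g₁ with
        | x k =>
          -- a⁻¹(wS) = wS for w = b x_k v
          right; right; left
          refine ⟨gen .b * w₁, Set.ext fun m => ?_⟩
          simp only [Set.mem_setOf_eq, mem_rIdeal]
          constructor
          · rintro ⟨u, h⟩
            have hnf := congrArg nf h
            rw [nf_mul_gen] at hnf
            rcases step'_a (nf m) with ⟨k', V', e1, e2⟩ | ⟨k', V', e1, e2⟩ | e2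
            · rw [e2] at hnf
              exact ⟨u, nf_inj hnf⟩
            · exfalso
              rw [e2] at hnf
              have hwu : nf (gen SGen.b * w₁ * u) = .b :: .x k :: nf (v * u) := by
                rw [mul_assoc, hw₁eq, mul_assoc, nf_cons (by simp), nf_cons (by simp)]
              rw [hwu] at hnf
              simp at hnf
            · exfalso
              rw [e2] at hnf
              have hwu : nf (gen SGen.b * w₁ * u) = .b :: .x k :: nf (v * u) := by
                rw [mul_assoc, hw₁eq, mul_assoc, nf_cons (by simp), nf_cons (by simp)]
              rw [hwu] at hnf
              simp at hnf
          · rintro ⟨u, rfl⟩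
            refine ⟨u, ?_⟩
            rw [mul_assoc, hw₁eq, mul_assoc, arel_x]
        | y k =>
          right; right; left
          refine ⟨gen .b * (gen (.y (k-1)) * v), Set.ext fun m => ?_⟩
          simp only [Set.mem_setOf_eq, mem_rIdeal]
          constructor
          · rintro ⟨u, h⟩
            have hnf := congrArg nf h
            rw [nf_mul_gen] at hnf
            have hwu : nf (gen SGen.b * w₁ * u) = .b :: .y k :: nf (v * u) := by
              rw [mul_assoc, hw₁eq, mul_assoc, nf_cons (by simp), nf_cons (by simp)]
            rcases step'_a (nf m) with ⟨k', V', e1, e2⟩ | ⟨k', V', e1, e2⟩ | e2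
            · exfalso
              rw [e2, e1, hwu] at hnf
              simp at hnf
            · rw [e2, hwu] at hnf
              have h1 : k' + 1 = k := by
                have := hnf
                injection this with _ t; injection t with t2 _
                injection t2
              have h2 : V' = nf (v * u) := by
                injection hnf with _ t; injection t
              rcases split e1 with ⟨m₁, rfl, hm₁⟩
              rcases split hm₁ with ⟨m₂, rfl, hm₂⟩
              refine ⟨u, ?_⟩
              have hm2 : m₂ = v * u := nf_inj (by rw [hm₂, h2])
              have hk : k' = k - 1 := by omega
              rw [hm2, hk, mul_assoc, mul_assoc]
            · exfalso
              rw [e2, hwu] at hnf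
              simp at hnf
          · rintro ⟨u, rfl⟩
            refine ⟨u, ?_⟩
            rw [mul_assoc, mul_assoc, arel_y, sub_add_cancel, hw₁eq, mul_assoc, mul_assoc]
        | a =>
          left
          apply Set.eq_empty_iff_forall_notMem.2
          rintro m ⟨u, h⟩
          have hT : ∃ T, (nf (w₁ * u) = SGen.a :: T ∨ nf (w₁ * u) = SGen.b :: T) := by
            rw [hw₁eq, mul_assoc]
            exact nf_a_head _
          rcases hT with ⟨T, hT⟩
          have hwu : nf (gen SGen.b * w₁ * u) = SGen.b :: nf (w₁ * u) := by
            rw [mul_assoc, nf_cons (by simp)]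
          have hnf := congrArg nf h
          rw [nf_mul_gen, hwu] at hnf
          rcases step'_a (nf m) with ⟨k', V', e1, e2⟩ | ⟨k', V', e1, e2⟩ | e2 <;>
            rw [e2] at hnf
          · rw [e1] at hnf
            rcases hT with hT | hT <;> rw [hT] at hnf <;> simp at hnf
          · rcases hT with hT | hT <;> rw [hT] at hnf <;> simp at hnf
          · simp at hnf
        | b =>
          left
          apply Set.eq_empty_iff_forall_notMem.2
          rintro m ⟨u, h⟩
          have hw1u : nf (w₁ * u) = SGen.b :: nf (v * u) := by
            rw [hw₁eq, mul_assoc, nf_cons (by simp)]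
          have hwu : nf (gen SGen.b * w₁ * u) = SGen.b :: SGen.b :: nf (v * u) := by
            rw [mul_assoc, nf_cons (by simp), hw1u]
          have hnf := congrArg nf h
          rw [nf_mul_gen, hwu] at hnf
          rcases step'_a (nf m) with ⟨k', V', e1, e2⟩ | ⟨k', V', e1, e2⟩ | e2 <;>
            rw [e2] at hnf
          · rw [e1] at hnf
            simp at hnf
          · simp at hnf
          · simp at hnf

lemma mem_imageXX {w n : S} : n ∈ (w * ·) '' XX ↔ ∃ ξ, ξ ∈ XX ∧ n = w * ξ := by
  constructor
  · rintro ⟨ξ, hξ, rfl⟩; exact ⟨ξ, hξ, rfl⟩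
  · rintro ⟨ξ, hξ, rfl⟩; exact ⟨ξ, hξ, rfl⟩

/-- nf of an element of `XX` starts with an `x` or `y` letter. -/
lemma nf_XX {ξ : S} (hξ : ξ ∈ XX) : ∃ k V, nf ξ = .x k :: V ∨ nf ξ = .y k :: V := by
  rcases mem_XX.1 hξ with ⟨k, u, rfl⟩ | ⟨k, u, rfl⟩
  · exact ⟨k, nf u, Or.inl (nf_cons (by simp) u)⟩
  · exact ⟨k, nf u, Or.inr (nf_cons (by simp) u)⟩

/-- the set of elements whose `g`-translate lies in `w·XX` belongs to the family. -/
lemma preB (g : SGen) (w : S) : InF {m : S | gen g * m ∈ (w * ·) '' XX} := by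
  rcases hn : nf w with _ | ⟨g₀, M⟩
  · -- w = 1
    have hw : w = 1 := nf_inj (by rw [hn, nf_one])
    subst hw
    cases g with
    | x k =>
      right; left
      apply Set.eq_univ_iff_forall.2
      intro m
      exact mem_imageXX.2 ⟨gen (.x k) * m, mem_XX.2 (Or.inl ⟨k, m, rfl⟩), (one_mul _).symm⟩
    | y k =>
      right; left
      apply Set.eq_univ_iff_forall.2
      intro m
      exact mem_imageXX.2 ⟨gen (.y k) * m, mem_XX.2 (Or.inr ⟨k, m, rfl⟩), (one_mul _).symm⟩
    | a =>
      left
      apply Set.eq_empty_iff_forall_notMem.2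
      intro m hm
      rcases mem_imageXX.1 hm with ⟨ξ, hξ, h⟩
      rw [one_mul] at h
      rcases nf_XX hξ with ⟨k, V, hv | hv⟩ <;>
        · have := congrArg nf h
          rcases nf_a_head m with ⟨T, hT | hT⟩ <;> rw [hT, hv] at this <;> simp at this
    | b =>
      left
      apply Set.eq_empty_iff_forall_notMem.2
      intro m hm
      rcases mem_imageXX.1 hm with ⟨ξ, hξ, h⟩
      rw [one_mul] at h
      rcases nf_XX hξ with ⟨k, V, hv | hv⟩ <;>
        · have := congrArg nf h
          rw [nf_cons (by simp), hv] at this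
          simp at this
  rcases split hn with ⟨w₁, rfl, hw₁⟩
  by_cases hgg : g = g₀
  · subst hgg
    right; right; right
    refine ⟨w₁, Set.ext fun m => ?_⟩
    simp only [Set.mem_setOf_eq]
    constructor
    · intro hm
      rcases mem_imageXX.1 hm with ⟨ξ, hξ, h⟩
      rw [mul_assoc] at h
      exact mem_imageXX.2 ⟨ξ, hξ, cancel_gen h⟩
    · intro hm
      rcases mem_imageXX.1 hm with ⟨ξ, hξ, h⟩
      exact mem_imageXX.2 ⟨ξ, hξ, by rw [h, mul_assoc]⟩
  -- g ≠ g₀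
  have empty_head : ∀ (hg : g ≠ SGen.a) (hg0 : g₀ ≠ SGen.a),
      InF {m : S | gen g * m ∈ ((gen g₀ * w₁) * ·) '' XX} := by
    intro hg hg0
    left
    apply Set.eq_empty_iff_forall_notMem.2
    intro m hm
    rcases mem_imageXX.1 hm with ⟨ξ, hξ, h⟩
    rw [mul_assoc] at h
    have := congrArg nf h
    rw [nf_cons hg, nf_cons hg0] at this
    exact hgg (by injection this)
  have empty_za : ∀ (hg : g ≠ SGen.a) (hg2 : g ≠ SGen.b) (hg0 : g₀ = SGen.a),
      InF {m : S | gen g * m ∈ ((gen g₀ * w₁) * ·) '' XX} := by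
    intro hg hg2 hg0
    subst hg0
    left
    apply Set.eq_empty_iff_forall_notMem.2
    intro m hm
    rcases mem_imageXX.1 hm with ⟨ξ, hξ, h⟩
    rw [mul_assoc] at h
    have := congrArg nf h
    rcases nf_a_head (w₁ * ξ) with ⟨T, hT | hT⟩ <;>
      rw [nf_cons hg, hT] at this <;> [exact hg (by injection this); exact hg2 (by injection this)]
  cases g with
  | x k =>
    by_cases h0 : g₀ = SGen.a
    · exact empty_za (by simp) (by simp) h0
    · exact empty_head (by simp) h0
  | y k =>
    by_cases h0 : g₀ = SGen.a
    · exact empty_za (by simp) (by simp) h0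
    · exact empty_head (by simp) h0
  | b =>
    cases g₀ with
    | b => exact absurd rfl hgg
    | x k => exact empty_head (by simp) (by simp)
    | y k => exact empty_head (by simp) (by simp)
    | a =>
      rcases peelA (nf w₁) w₁ rfl with ⟨j, r, hw₁eq, hrep, hr⟩
      rcases hr with hr | ⟨g', M', hg', hr⟩
      · -- r = 1 : w = a^{j+1} : empty
        have hr1 : r = 1 := nf_inj (by rw [hr, nf_one])
        subst hr1
        have hw : gen SGen.a * w₁ = apow (j+1) := by
          rw [hw₁eq, mul_one, apow_succ]
        left
        apply Set.eq_empty_iff_forall_notMem.2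
        intro m hm
        rcases mem_imageXX.1 hm with ⟨ξ, hξ, h⟩
        rw [hw] at h
        rcases nf_XX hξ with ⟨k, V, hv | hv⟩ <;>
          · have hnf := congrArg nf h
            rw [nf_cons (by simp) m,
              nf_apow_default (j+1) (by rw [hv]; simp) (by rw [hv]; simp),
              List.replicate_succ] at hnf
            simp at hnf
      · cases g' with
        | a => exact absurd rfl hg'
        | x k =>
          left
          apply Set.eq_empty_iff_forall_notMem.2
          intro m hm
          rcases mem_imageXX.1 hm with ⟨ξ, hξ, h⟩
          rcases split hr with ⟨r₁, hreq, hr₁⟩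
          have hru : nf (r * ξ) = SGen.x k :: nf (r₁ * ξ) := by
            rw [hreq, mul_assoc, nf_cons (by simp)]
          have hwu : gen SGen.a * w₁ * ξ = gen SGen.a * (apow j * (r * ξ)) := by
            rw [mul_assoc, hw₁eq, mul_assoc]
          have hwu2 : nf (gen SGen.a * w₁ * ξ) = SGen.a ::
              (List.replicate j SGen.a ++ nf (r * ξ)) := by
            rw [hwu, nf_mul_gen,
              nf_apow_default j (by rw [hru]; simp) (by rw [hru]; simp)]
            rcases step'_a (List.replicate j SGen.a ++ nf (r * ξ)) with
              ⟨k', V', e1, e2⟩ | ⟨k', V', e1, e2⟩ | e2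
            · exfalso
              cases j with
              | zero => rw [List.replicate, List.nil_append, hru] at e1; simp at e1
              | succ j => simp [List.replicate_succ] at e1
            · exfalso
              cases j with
              | zero => rw [List.replicate, List.nil_append, hru] at e1; simp at e1
              | succ j => simp [List.replicate_succ] at e1
            · rw [e2]
          have hnf := congrArg nf h
          rw [nf_cons (by simp) m, hwu2] at hnf
          simp at hnf
        | y k =>
          left
          apply Set.eq_empty_iff_forall_notMem.2
          intro m hm
          rcases mem_imageXX.1 hm with ⟨ξ, hξ, h⟩
          rcases split hr with ⟨r₁, hreq, hr₁⟩
          have hru : nf (r * ξ) = SGen.y k :: nf (r₁ * ξ) := by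
            rw [hreq, mul_assoc, nf_cons (by simp)]
          have hwu : gen SGen.a * w₁ * ξ = gen SGen.a * (apow j * (r * ξ)) := by
            rw [mul_assoc, hw₁eq, mul_assoc]
          have hwu2 : nf (gen SGen.a * w₁ * ξ) = SGen.a ::
              (List.replicate j SGen.a ++ nf (r * ξ)) := by
            rw [hwu, nf_mul_gen,
              nf_apow_default j (by rw [hru]; simp) (by rw [hru]; simp)]
            rcases step'_a (List.replicate j SGen.a ++ nf (r * ξ)) with
              ⟨k', V', e1, e2⟩ | ⟨k', V', e1, e2⟩ | e2
            · exfalso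
              cases j with
              | zero => rw [List.replicate, List.nil_append, hru] at e1; simp at e1
              | succ j => simp [List.replicate_succ] at e1
            · exfalso
              cases j with
              | zero => rw [List.replicate, List.nil_append, hru] at e1; simp at e1
              | succ j => simp [List.replicate_succ] at e1
            · rw [e2]
          have hnf := congrArg nf h
          rw [nf_cons (by simp) m, hwu2] at hnf
          simp at hnf
        | b =>
          rcases split hr with ⟨r₁, hreq, hr₁⟩
          have hwfac : ∀ u : S, gen SGen.a * w₁ * u = apow (j+1) * (gen SGen.b * (r₁ * u)) := by
            intro u
            rw [hw₁eq, hreq, apow_succ]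
            rw [mul_assoc, mul_assoc, mul_assoc, mul_assoc]
          rcases hM' : M' with _ | ⟨g₁, M₂⟩
          · -- r₁ = 1 : w = a^{j+1} b : result XX
            rw [hM'] at hr₁
            have hr11 : r₁ = 1 := nf_inj (by rw [hr₁, nf_one])
            subst hr11
            have claim : {m : S | gen .b * m ∈ ((gen .a * w₁) * ·) '' XX} = XX := by
              ext m
              simp only [Set.mem_setOf_eq]
              constructor
              · intro hm
                rcases mem_imageXX.1 hm with ⟨ξ, hξ, h⟩
                rw [hwfac ξ, one_mul] at h
                have hnf := congrArg nf h
                rw [nf_cons (by simp) m] at hnf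
                rcases mem_XX.1 hξ with ⟨k, u, rfl⟩ | ⟨k, u, rfl⟩
                · rw [nf_apow_bx (j+1)
                    (by rw [nf_cons (by simp), nf_cons (by simp)])] at hnf
                  have hm2 : nf m = SGen.x k :: nf u := by injection hnf
                  rcases split hm2 with ⟨m', rfl, _⟩
                  exact mem_XX.2 (Or.inl ⟨k, m', rfl⟩)
                · rw [nf_apow_by (j+1)
                    (by rw [nf_cons (by simp), nf_cons (by simp)])] at hnf
                  have hm2 : nf m = SGen.y (k + (j+1:ℕ)) :: nf u := by injection hnf
                  rcases split hm2 with ⟨m', rfl, _⟩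
                  exact mem_XX.2 (Or.inr ⟨_, m', rfl⟩)
              · intro hm
                rcases mem_XX.1 hm with ⟨k, u, rfl⟩ | ⟨k, u, rfl⟩
                · refine mem_imageXX.2 ⟨gen (.x k) * u, mem_XX.2 (Or.inl ⟨k, u, rfl⟩), ?_⟩
                  rw [hwfac, one_mul, apow_bx]
                · refine mem_imageXX.2 ⟨gen (.y (k - (j+1:ℕ))) * u,
                    mem_XX.2 (Or.inr ⟨_, u, rfl⟩), ?_⟩
                  rw [hwfac, one_mul, apow_by]
                  congr 3
                  push_cast
                  ring
            right; right; right
            exact ⟨1, by rw [claim, image_one]⟩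
          · rw [hM'] at hr₁
            rcases split hr₁ with ⟨r₂, hr₁eq, hr₂⟩
            cases g₁ with
            | a =>
              left
              apply Set.eq_empty_iff_forall_notMem.2
              intro m hm
              rcases mem_imageXX.1 hm with ⟨ξ, hξ, h⟩
              rw [hwfac ξ] at h
              have hr1u : ∃ T, (nf (r₁ * ξ) = SGen.a :: T ∨ nf (r₁ * ξ) = SGen.b :: T) := by
                rw [hr₁eq, mul_assoc]; exact nf_a_head _
              rcases hr1u with ⟨T, hT⟩
              have hnb : nf (gen SGen.b * (r₁ * ξ)) = SGen.b :: nf (r₁ * ξ) :=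
                nf_cons (by simp) _
              have hnotx : ∀ k V, nf (gen SGen.b * (r₁ * ξ)) ≠ .b :: .x k :: V := by
                intro k V hc
                rw [hnb] at hc
                rcases hT with hT | hT <;> rw [hT] at hc <;> simp at hc
              have hnoty : ∀ k V, nf (gen SGen.b * (r₁ * ξ)) ≠ .b :: .y k :: V := by
                intro k V hc
                rw [hnb] at hc
                rcases hT with hT | hT <;> rw [hT] at hc <;> simp at hc
              have hnf := congrArg nf h
              rw [nf_cons (by simp) m, nf_apow_default (j+1) hnotx hnoty,
                List.replicate_succ] at hnf
              simp at hnf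
            | b =>
              left
              apply Set.eq_empty_iff_forall_notMem.2
              intro m hm
              rcases mem_imageXX.1 hm with ⟨ξ, hξ, h⟩
              rw [hwfac ξ] at h
              have hr1u : nf (r₁ * ξ) = SGen.b :: nf (r₂ * ξ) := by
                rw [hr₁eq, mul_assoc]; exact nf_cons (by simp) _
              have hnb : nf (gen SGen.b * (r₁ * ξ)) = SGen.b :: nf (r₁ * ξ) :=
                nf_cons (by simp) _
              have hnotx : ∀ k V, nf (gen SGen.b * (r₁ * ξ)) ≠ .b :: .x k :: V := by
                intro k V hc
                rw [hnb, hr1u] at hc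
                simp at hc
              have hnoty : ∀ k V, nf (gen SGen.b * (r₁ * ξ)) ≠ .b :: .y k :: V := by
                intro k V hc
                rw [hnb, hr1u] at hc
                simp at hc
              have hnf := congrArg nf h
              rw [nf_cons (by simp) m, nf_apow_default (j+1) hnotx hnoty,
                List.replicate_succ] at hnf
              simp at hnf
            | x k =>
              exfalso
              have hwval : gen SGen.a * w₁ = gen SGen.b * (gen (.x k) * r₂) := by
                have := hwfac 1
                rw [mul_one, mul_one, hr₁eq, apow_bx] at this
                exact this
              have := hn
              rw [hwval, nf_cons (by simp)] at this
              simp at this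
            | y k =>
              exfalso
              have hwval : gen SGen.a * w₁ = gen SGen.b * (gen (.y (k + (j+1:ℕ))) * r₂) := by
                have := hwfac 1
                rw [mul_one, mul_one, hr₁eq, apow_by] at this
                exact this
              have := hn
              rw [hwval, nf_cons (by simp)] at this
              simp at this
  | a =>
    cases g₀ with
    | a => exact absurd rfl hgg
    | x k =>
      left
      apply Set.eq_empty_iff_forall_notMem.2
      intro m hm
      rcases mem_imageXX.1 hm with ⟨ξ, hξ, h⟩
      rw [mul_assoc] at h
      have := congrArg nf h
      rcases nf_a_head m with ⟨T, hT | hT⟩ <;>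
        rw [hT, nf_cons (by simp)] at this <;> exact absurd this (by simp)
    | y k =>
      left
      apply Set.eq_empty_iff_forall_notMem.2
      intro m hm
      rcases mem_imageXX.1 hm with ⟨ξ, hξ, h⟩
      rw [mul_assoc] at h
      have := congrArg nf h
      rcases nf_a_head m with ⟨T, hT | hT⟩ <;>
        rw [hT, nf_cons (by simp)] at this <;> exact absurd this (by simp)
    | b =>
      rcases hM : M with _ | ⟨g₁, V⟩
      · -- w₁ = 1 : a⁻¹(b·XX) = b·XX
        rw [hM] at hw₁
        have hw11 : w₁ = 1 := nf_inj (by rw [hw₁, nf_one])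
        subst hw11
        have claim : {m : S | gen .a * m ∈ ((gen .b * 1) * ·) '' XX} = (gen .b * ·) '' XX := by
          ext m
          simp only [Set.mem_setOf_eq]
          constructor
          · intro hm
            rcases mem_imageXX.1 hm with ⟨ξ, hξ, h⟩
            rw [mul_one] at h
            have hnf := congrArg nf h
            rw [nf_mul_gen, nf_cons (show SGen.b ≠ SGen.a by simp) ξ] at hnf
            rcases step'_a (nf m) with ⟨k', V', e1, e2⟩ | ⟨k', V', e1, e2⟩ | e2
            · rcases split e1 with ⟨m₁, rfl, hm₁⟩
              rcases split hm₁ with ⟨m₂, rfl, _⟩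
              exact ⟨gen (.x k') * m₂, mem_XX.2 (Or.inl ⟨k', m₂, rfl⟩), rfl⟩
            · rcases split e1 with ⟨m₁, rfl, hm₁⟩
              rcases split hm₁ with ⟨m₂, rfl, _⟩
              exact ⟨gen (.y k') * m₂, mem_XX.2 (Or.inr ⟨k', m₂, rfl⟩), rfl⟩
            · rw [e2] at hnf
              simp at hnf
          · intro hm
            rcases mem_imageXX.1 hm with ⟨ξ, hξ, rfl⟩
            rcases mem_XX.1 hξ with ⟨k, u, rfl⟩ | ⟨k, u, rfl⟩
            · exact mem_imageXX.2 ⟨gen (.x k) * u, mem_XX.2 (Or.inl ⟨k, u, rfl⟩),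
                by rw [arel_x, mul_one]⟩
            · exact mem_imageXX.2 ⟨gen (.y (k+1)) * u, mem_XX.2 (Or.inr ⟨_, u, rfl⟩),
                by rw [arel_y, mul_one]⟩
        right; right; right
        exact ⟨gen .b, claim⟩
      · rw [hM] at hw₁
        rcases split hw₁ with ⟨v, hw₁eq, hv⟩
        cases g₁ with
        | x k =>
          right; right; right
          refine ⟨gen .b * w₁, Set.ext fun m => ?_⟩
          simp only [Set.mem_setOf_eq]
          have hrhs : ∀ ξ : S, gen SGen.b * w₁ * ξ = gen .b * (gen (.x k) * (v * ξ)) := by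
            intro ξ
            rw [mul_assoc, hw₁eq, mul_assoc]
          constructor
          · intro hm
            rcases mem_imageXX.1 hm with ⟨ξ, hξ, h⟩
            have hnf := congrArg nf h
            rw [nf_mul_gen] at hnf
            rcases step'_a (nf m) with ⟨k', V', e1, e2⟩ | ⟨k', V', e1, e2⟩ | e2
            · rw [e2] at hnf
              exact mem_imageXX.2 ⟨ξ, hξ, nf_inj hnf⟩
            · exfalso
              rw [e2, hrhs ξ, nf_cons (by simp), nf_cons (by simp)] at hnf
              simp at hnf
            · exfalso
              rw [e2, hrhs ξ, nf_cons (by simp), nf_cons (by simp)] at hnf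
              simp at hnf
          · intro hm
            rcases mem_imageXX.1 hm with ⟨ξ, hξ, rfl⟩
            refine mem_imageXX.2 ⟨ξ, hξ, ?_⟩
            rw [hrhs ξ, arel_x, ← hrhs ξ]
        | y k =>
          right; right; right
          refine ⟨gen .b * (gen (.y (k-1)) * v), Set.ext fun m => ?_⟩
          simp only [Set.mem_setOf_eq]
          have hrhs : ∀ ξ : S, gen SGen.b * w₁ * ξ = gen .b * (gen (.y k) * (v * ξ)) := by
            intro ξ
            rw [mul_assoc, hw₁eq, mul_assoc]
          constructor
          · intro hm
            rcases mem_imageXX.1 hm with ⟨ξ, hξ, h⟩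
            have hnf := congrArg nf h
            rw [nf_mul_gen] at hnf
            rcases step'_a (nf m) with ⟨k', V', e1, e2⟩ | ⟨k', V', e1, e2⟩ | e2
            · exfalso
              rw [e2, e1, hrhs ξ, nf_cons (by simp), nf_cons (by simp)] at hnf
              simp at hnf
            · rw [e2, hrhs ξ, nf_cons (by simp), nf_cons (by simp)] at hnf
              have h1 : k' + 1 = k := by
                have := hnf
                injection this with _ t; injection t with t2 _
                injection t2
              have h2 : V' = nf (v * ξ) := by
                injection hnf with _ t; injection t
              rcases split e1 with ⟨m₁, rfl, hm₁⟩
              rcases split hm₁ with ⟨m₂, rfl, hm₂⟩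
              have hm2 : m₂ = v * ξ := nf_inj (by rw [hm₂, h2])
              have hk : k' = k - 1 := by omega
              refine mem_imageXX.2 ⟨ξ, hξ, ?_⟩
              rw [hm2, hk, mul_assoc, mul_assoc]
            · exfalso
              rw [e2, hrhs ξ, nf_cons (by simp), nf_cons (by simp)] at hnf
              simp at hnf
          · intro hm
            rcases mem_imageXX.1 hm with ⟨ξ, hξ, rfl⟩
            refine mem_imageXX.2 ⟨ξ, hξ, ?_⟩
            rw [mul_assoc, mul_assoc, arel_y, sub_add_cancel, ← hrhs ξ]
        | a =>
          left
          apply Set.eq_empty_iff_forall_notMem.2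
          intro m hm
          rcases mem_imageXX.1 hm with ⟨ξ, hξ, h⟩
          have hT : ∃ T, (nf (w₁ * ξ) = SGen.a :: T ∨ nf (w₁ * ξ) = SGen.b :: T) := by
            rw [hw₁eq, mul_assoc]
            exact nf_a_head _
          rcases hT with ⟨T, hT⟩
          have hwu : nf (gen SGen.b * w₁ * ξ) = SGen.b :: nf (w₁ * ξ) := by
            rw [mul_assoc, nf_cons (by simp)]
          have hnf := congrArg nf h
          rw [nf_mul_gen, hwu] at hnf
          rcases step'_a (nf m) with ⟨k', V', e1, e2⟩ | ⟨k', V', e1, e2⟩ | e2 <;>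
            rw [e2] at hnf
          · rw [e1] at hnf
            rcases hT with hT | hT <;> rw [hT] at hnf <;> simp at hnf
          · rcases hT with hT | hT <;> rw [hT] at hnf <;> simp at hnf
          · simp at hnf
        | b =>
          left
          apply Set.eq_empty_iff_forall_notMem.2
          intro m hm
          rcases mem_imageXX.1 hm with ⟨ξ, hξ, h⟩
          have hw1u : nf (w₁ * ξ) = SGen.b :: nf (v * ξ) := by
            rw [hw₁eq, mul_assoc, nf_cons (by simp)]
          have hwu : nf (gen SGen.b * w₁ * ξ) = SGen.b :: SGen.b :: nf (v * ξ) := by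
            rw [mul_assoc, nf_cons (by simp), hw1u]
          have hnf := congrArg nf h
          rw [nf_mul_gen, hwu] at hnf
          rcases step'_a (nf m) with ⟨k', V', e1, e2⟩ | ⟨k', V', e1, e2⟩ | e2 <;>
            rw [e2] at hnf
          · rw [e1] at hnf
            simp at hnf
          · simp at hnf
          · simp at hnf

lemma imgF {Y : Set S} (t : S) (h : InF Y) : InF ((t * ·) '' Y) := by
  rcases h with rfl | rfl | ⟨w, rfl⟩ | ⟨w, rfl⟩
  · left; simp
  · right; right; left
    refine ⟨t, ?_⟩
    ext m
    constructor
    · rintro ⟨u, _, rfl⟩; exact ⟨u, rfl⟩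
    · rintro ⟨u, rfl⟩; exact ⟨u, trivial, rfl⟩
  · right; right; left
    refine ⟨t * w, ?_⟩
    ext m
    constructor
    · rintro ⟨_, ⟨u, rfl⟩, rfl⟩; exact ⟨u, by rw [mul_assoc]⟩
    · rintro ⟨u, rfl⟩; exact ⟨w * u, ⟨u, rfl⟩, by rw [mul_assoc]⟩
  · right; right; right
    refine ⟨t * w, ?_⟩
    rw [show ((t * w) * ·) = (t * ·) ∘ (w * ·) from funext fun z => mul_assoc t w z]
    rw [Set.image_comp]

lemma preF_gen (g : SGen) {Y : Set S} (h : InF Y) : InF {m : S | gen g * m ∈ Y} := by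
  rcases h with rfl | rfl | ⟨w, rfl⟩ | ⟨w, rfl⟩
  · left; simp
  · right; left; simp
  · exact preA g w
  · exact preB g w

lemma preF_word : ∀ (L : List SGen) (Y : Set S), InF Y → InF {m : S | mk1 L * m ∈ Y} := by
  intro L
  induction L with
  | nil =>
    intro Y hY
    have : {m : S | mk1 [] * m ∈ Y} = Y := by
      ext m; simp only [Set.mem_setOf_eq, mk1_nil, one_mul]
    rwa [this]
  | cons g L' ih =>
    intro Y hY
    have : {m : S | mk1 (g :: L') * m ∈ Y} = {m : S | mk1 L' * m ∈ {n : S | gen g * n ∈ Y}} := by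
      ext m
      simp only [Set.mem_setOf_eq, mk1_cons, mul_assoc]
    rw [this]
    exact ih _ (preF_gen g hY)

lemma preF (t : S) {Y : Set S} (h : InF Y) : InF {m : S | t * m ∈ Y} := by
  have := preF_word (nf t) Y h
  rwa [mk1_nf] at this

lemma InF_of_constructible {X : Set S} (h : IsConstructible S X) : InF X := by
  induction h with
  | univ => right; left; rfl
  | mul t _ ih => exact imgF t ih
  | preimage t _ ih => exact preF t ih

lemma XX_constructible_eq :
    XX = {m : S | gen .b * m ∈ {m' : S | gen .a * m' ∈ (gen .b * ·) '' Set.univ}} := by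
  ext m
  simp only [Set.mem_setOf_eq]
  constructor
  · intro hm
    rcases mem_XX.1 hm with ⟨k, u, rfl⟩ | ⟨k, u, rfl⟩
    · exact ⟨gen (.x k) * u, trivial, (arel_x k u).symm⟩
    · exact ⟨gen (.y (k+1)) * u, trivial, (arel_y k u).symm⟩
  · rintro ⟨u, -, hu⟩
    have hnf := congrArg nf hu.symm
    rw [nf_mul_gen, nf_cons (show SGen.b ≠ SGen.a by simp) m,
      nf_cons (show SGen.b ≠ SGen.a by simp) u] at hnf
    rcases hm : nf m with _ | ⟨gm, Mm⟩
    · rw [hm] at hnf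
      rcases step'_a [SGen.b] with ⟨k', V', e1, e2⟩ | ⟨k', V', e1, e2⟩ | e2 <;>
        first
          | simp at e1
          | (rw [e2] at hnf; simp at hnf)
    · cases gm with
      | a =>
        rw [hm] at hnf
        rcases step'_a (SGen.b :: SGen.a :: Mm) with ⟨k', V', e1, e2⟩ | ⟨k', V', e1, e2⟩ | e2 <;>
          first
            | simp at e1
            | (rw [e2] at hnf; simp at hnf)
      | b =>
        rw [hm] at hnf
        rcases step'_a (SGen.b :: SGen.b :: Mm) with ⟨k', V', e1, e2⟩ | ⟨k', V', e1, e2⟩ | e2 <;>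
          first
            | simp at e1
            | (rw [e2] at hnf; simp at hnf)
      | x k =>
        rcases split hm with ⟨m', rfl, _⟩
        exact mem_XX.2 (Or.inl ⟨k, m', rfl⟩)
      | y k =>
        rcases split hm with ⟨m', rfl, _⟩
        exact mem_XX.2 (Or.inr ⟨k, m', rfl⟩)

end SP

/-- For each fixed `n ∈ ℤ`, the only constructible right ideals of `S` containing `yₙ`
are `S`, `yₙS` and `X = ⋃ₘ xₘ S ∪ ⋃ₘ yₘ S`. -/
theorem S_constructible_containing_y (n : ℤ) (X : Set S) :
    (IsConstructible S X ∧ gen (.y n) ∈ X) ↔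
      (X = Set.univ ∨ X = rIdeal (gen (.y n)) ∨
        X = (⋃ m : ℤ, rIdeal (gen (.x m))) ∪ ⋃ m : ℤ, rIdeal (gen (.y m))) := by
  have hXXdef : ((⋃ m : ℤ, rIdeal (gen (.x m))) ∪ ⋃ m : ℤ, rIdeal (gen (.y m))) = SP.XX := rfl
  constructor
  · rintro ⟨hc, hy⟩
    rcases SP.InF_of_constructible hc with rfl | rfl | ⟨w, rfl⟩ | ⟨w, rfl⟩
    · exact absurd hy (Set.notMem_empty _)
    · left; rfl
    · -- rIdeal w contains yₙ
      rcases hy with ⟨u, hu⟩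
      rcases hnw : SP.nf w with _ | ⟨g₀, M⟩
      · have hw1 : w = 1 := SP.nf_inj (by rw [hnw, SP.nf_one])
        subst hw1
        left
        apply Set.eq_univ_iff_forall.2
        intro m
        exact ⟨m, (one_mul m).symm⟩
      · rcases SP.split hnw with ⟨w₁, rfl, hw₁⟩
        rw [mul_assoc] at hu
        have hnf := congrArg SP.nf hu
        rw [SP.nf_gen] at hnf
        cases g₀ with
        | a =>
          rcases SP.nf_a_head (w₁ * u) with ⟨T, hT | hT⟩ <;> rw [hT] at hnf <;> simp at hnf
        | b =>
          rw [SP.nf_cons (by simp)] at hnf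
          simp at hnf
        | x k =>
          rw [SP.nf_cons (by simp)] at hnf
          simp at hnf
        | y k =>
          rw [SP.nf_cons (by simp)] at hnf
          injection hnf with t1 t2
          injection t1 with e
          have hw1u : SP.nf (w₁ * u) = [] := t2.symm
          have : w₁ * u = 1 := SP.nf_inj (by rw [hw1u, SP.nf_one])
          have hw11 : w₁ = 1 := (SP.mul_eq_one this).1
          right; left
          rw [← e, hw11, mul_one]
    · -- w·XX contains yₙ
      rcases hy with ⟨ξ, hξ, hu⟩
      replace hu : w * ξ = gen (SGen.y n) := hu
      rcases hnw : SP.nf w with _ | ⟨g₀, M⟩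
      · have hw1 : w = 1 := SP.nf_inj (by rw [hnw, SP.nf_one])
        subst hw1
        right; right
        rw [hXXdef, SP.image_one]
      · exfalso
        rcases SP.split hnw with ⟨w₁, hweq, hw₁⟩
        rw [hweq, mul_assoc] at hu
        have hnf := congrArg SP.nf hu
        rw [SP.nf_gen] at hnf
        cases g₀ with
        | a =>
          rcases SP.nf_a_head (w₁ * ξ) with ⟨T, hT | hT⟩ <;> rw [hT] at hnf <;> simp at hnf
        | b =>
          rw [SP.nf_cons (by simp)] at hnf
          simp at hnf
        | x k =>
          rw [SP.nf_cons (by simp)] at hnf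
          simp at hnf
        | y k =>
          rw [SP.nf_cons (by simp)] at hnf
          have hw1u : SP.nf (w₁ * ξ) = [] := by injection hnf
          have h1 : w₁ * ξ = 1 := SP.nf_inj (by rw [hw1u, SP.nf_one])
          have hξ1 : ξ = 1 := (SP.mul_eq_one h1).2
          rcases SP.nf_XX hξ with ⟨k', V, hv | hv⟩ <;>
            · rw [hξ1, SP.nf_one] at hv
              simp at hv
  · rintro (rfl | rfl | rfl)
    · exact ⟨.univ, trivial⟩
    · constructor
      · have : rIdeal (gen (SGen.y n)) = (gen (SGen.y n) * ·) '' Set.univ := by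
          ext m
          constructor
          · rintro ⟨u, rfl⟩; exact ⟨u, trivial, rfl⟩
          · rintro ⟨u, -, rfl⟩; exact ⟨u, rfl⟩
        rw [this]
        exact .mul _ .univ
      · exact ⟨1, (mul_one _).symm⟩
    · constructor
      · rw [hXXdef, SP.XX_constructible_eq]
        exact .preimage _ (.preimage _ (.mul _ .univ))
      · rw [hXXdef]
        exact SP.mem_XX.2 (Or.inr ⟨n, 1, (mul_one _).symm⟩)
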